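/- Let u_1 ≥ u_2 ≥ … ≥ 0 with S = ∑_i u_i < ∞. Then ∑_i u_i³ ≤ S³, and consequently for any θ ∈ ℝ: −(1/24)∑_i u_i³ + (1/6)((S − θ)⁺)³ + θ³/6 ≥ −S³/24 + (1/6)((S − θ)⁺)³ + θ³/6 ≥ 0. -/
import Mathlib


/-- For a nonincreasing nonnegative summable sequence with sum `S`, one has
`∑ u_i³ ≤ S³`, and consequently
`−(1/24)∑ u_i³ + (1/6)((S−θ)⁺)³ + θ³/6 ≥ −S³/24 + (1/6)((S−θ)⁺)³ + θ³/6 ≥ 0`. -/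
theorem stmt_12 (u : ℕ → ℝ) (hmono : ∀ i j : ℕ, i ≤ j → u j ≤ u i)
    (hnn : ∀ i, 0 ≤ u i) (hsum : Summable u) (θ : ℝ) :
    (∑' i, (u i) ^ 3) ≤ (∑' i, u i) ^ 3 ∧
    (-(∑' i, u i) ^ 3 / 24 + (1 / 6) * (max ((∑' i, u i) - θ) 0) ^ 3 + θ ^ 3 / 6
      ≤ -(1 / 24) * (∑' i, (u i) ^ 3)
          + (1 / 6) * (max ((∑' i, u i) - θ) 0) ^ 3 + θ ^ 3 / 6) ∧
    0 ≤ -(∑' i, u i) ^ 3 / 24 + (1 / 6) * (max ((∑' i, u i) - θ) 0) ^ 3 + θ ^ 3 / 6 := by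
  set S := ∑' i, u i with hS
  have hS0 : 0 ≤ S := tsum_nonneg hnn
  have hle : ∀ i, u i ≤ S := fun i => Summable.le_tsum hsum i (fun j _ => hnn j)
  have hcube_le : ∀ i, (u i) ^ 3 ≤ S ^ 2 * u i := by
    intro i
    have h1 : u i ≤ S := hle i
    have h2 : 0 ≤ u i := hnn i
    nlinarith [mul_nonneg (mul_nonneg h2 (by linarith : (0:ℝ) ≤ S - u i)) (by linarith : (0:ℝ) ≤ S + u i)]
  have hsum2 : Summable (fun i => S ^ 2 * u i) := hsum.mul_left _
  have hsumc : Summable (fun i => (u i) ^ 3) :=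
    Summable.of_nonneg_of_le (fun i => pow_nonneg (hnn i) 3) hcube_le hsum2
  have h1 : (∑' i, (u i) ^ 3) ≤ S ^ 3 := by
    calc (∑' i, (u i) ^ 3) ≤ ∑' i, S ^ 2 * u i := Summable.tsum_le_tsum hcube_le hsumc hsum2
    _ = S ^ 2 * S := by rw [tsum_mul_left]
    _ = S ^ 3 := by ring
  refine ⟨h1, by linarith, ?_⟩
  rcases le_or_gt S θ with h | h
  · rw [max_eq_right (by linarith)]
    nlinarith [pow_le_pow_left₀ hS0 h 3, pow_nonneg hS0 3]
  · rw [max_eq_left (by linarith)]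
    nlinarith [sq_nonneg (S - 2 * θ), hS0]
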